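/- Let ρ, n ∈ ℕ, let σ : G → Sym(n) be a group homomorphism, and let x ∈ 𝙰^n be such that the pullback name x^σ_v belongs to ℰ(sym_ρ(G)) for every v ∈ [n]. For each v let φ_v ∈ sym_ρ(G) be the unique element with ℰ(φ_v) = x^σ_v. Then there exists a unique group homomorphism τ : G → Sym(n) satisfying τ(g)v = σ((φ_v⁻¹(g⁻¹))⁻¹)v for all g ∈ G and v ∈ [n]. Moreover, ℱ(ℰ⁻¹(x^σ_v)) = x^τ_v for every v ∈ [n]. -/

import Mathlib

/- Lemma (L:tau): rearranging periodic orbits.  Given a homomorphism σ : G → Sym(n)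
   and x ∈ 𝙰^n all of whose pullback names lie in ℰ(sym_ρ(G)), there is a unique
   homomorphism τ with τ(g)v = σ((φ_v⁻¹(g⁻¹))⁻¹)v, and ℱ(ℰ⁻¹(x^σ_v)) = x^τ_v. -/

namespace Stmt17

abbrev G (r : ℕ) : Type := FreeGroup (Fin r)

def SS (r : ℕ) : Set (G r) :=
  {g | ∃ i : Fin r, g = FreeGroup.of i ∨ g = (FreeGroup.of i)⁻¹}

abbrev A (r : ℕ) : Type := SS r → G r

/-- `ℰ(φ)_h(s) = φ(h)⁻¹ φ(h s)`. -/
def E (r : ℕ) (φ : Equiv.Perm (G r)) : G r → A r :=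
  fun h s => (φ h)⁻¹ * φ (h * s.val)

/-- `ℱ(φ)_h(s) = h⁻¹ φ(φ⁻¹(h) s)`. -/
def F (r : ℕ) (φ : Equiv.Perm (G r)) : G r → A r :=
  fun h s => h⁻¹ * φ (φ.symm h * s.val)

def InSymRho (r ρ : ℕ) (φ : Equiv.Perm (G r)) : Prop :=
  φ 1 = 1 ∧
    ∀ (g s : G r), s ∈ SS r →
      ((φ g)⁻¹ * φ (g * s)).norm ≤ ρ ∧ ((φ.symm g)⁻¹ * φ.symm (g * s)).norm ≤ ρ

/-- The pullback name of `x : [n] → C` at `v`, `x^σ_v(g) = x(σ(g)⁻¹ v)`. -/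
def pull (r : ℕ) {n : ℕ} {C : Type*} (σ : G r →* Equiv.Perm (Fin n))
    (x : Fin n → C) (v : Fin n) : G r → C :=
  fun g => x ((σ g)⁻¹ v)

/-- A function `G → G` is determined by its value at `1` together with its `E`-data. -/
lemma ext_of_E {r : ℕ} (f f' : G r → G r) (h1 : f 1 = f' 1)
    (hE : ∀ (h s : G r), s ∈ SS r → (f h)⁻¹ * f (h * s) = (f' h)⁻¹ * f' (h * s)) :
    f = f' := by
  have key : ∀ g h : G r, f h = f' h → f (h * g) = f' (h * g) := by
    intro g
    induction g using FreeGroup.induction_on with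
    | C1 => intro h hh; simpa using hh
    | of i =>
      intro h hh
      show f (h * FreeGroup.of i) = f' (h * FreeGroup.of i)
      have hs : FreeGroup.of i ∈ SS r := ⟨i, Or.inl rfl⟩
      have := hE h _ hs
      have e1 : f (h * FreeGroup.of i) = f h * ((f h)⁻¹ * f (h * FreeGroup.of i)) := by group
      rw [e1, this, hh]
      group
    | inv_of i _ =>
      intro h hh
      show f (h * (FreeGroup.of i)⁻¹) = f' (h * (FreeGroup.of i)⁻¹)
      have hs : FreeGroup.of i ∈ SS r := ⟨i, Or.inl rfl⟩
      have h2 := hE (h * (FreeGroup.of i)⁻¹) _ hs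
      rw [inv_mul_cancel_right] at h2
      have : (f (h * (FreeGroup.of i)⁻¹))⁻¹ = (f' (h * (FreeGroup.of i)⁻¹))⁻¹ := by
        have := mul_right_cancel (h2.trans (by rw [hh]))
        exact this
      exact inv_injective this
    | mul a b ha hb =>
      intro h hh
      have := hb (h * a) (ha h hh)
      simpa [mul_assoc] using this
  funext g
  simpa using key g 1 h1

section main
variable {r n : ℕ} (σ : G r →* Equiv.Perm (Fin n)) (x : Fin n → A r)
  (φ : Fin n → Equiv.Perm (G r))

/-- The cocycle identity. -/
lemma cocycle (ρ : ℕ)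
    (hφ : ∀ v : Fin n, InSymRho r ρ (φ v) ∧ E r (φ v) = pull r σ x v)
    (v : Fin n) (g h : G r) :
    (φ v g)⁻¹ * φ v (g * h) = φ ((σ g)⁻¹ v) h := by
  have main : (fun h => (φ v g)⁻¹ * φ v (g * h)) = fun h => φ ((σ g)⁻¹ v) h := by
    apply ext_of_E
    · simpa using ((hφ ((σ g)⁻¹ v)).1.1).symm
    · intro h s hs
      have hv := (hφ v).2
      have hw := (hφ ((σ g)⁻¹ v)).2
      have e1 : ∀ h' : G r, (φ v h')⁻¹ * φ v (h' * s) = x ((σ h')⁻¹ v) ⟨s, hs⟩ := by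
        intro h'
        have := congrFun (congrFun hv h') ⟨s, hs⟩
        simpa [E, pull] using this
      have e2 : (φ ((σ g)⁻¹ v) h)⁻¹ * φ ((σ g)⁻¹ v) (h * s)
          = x ((σ h)⁻¹ ((σ g)⁻¹ v)) ⟨s, hs⟩ := by
        have := congrFun (congrFun hw h) ⟨s, hs⟩
        simpa [E, pull] using this
      have lhs : ((φ v g)⁻¹ * φ v (g * h))⁻¹ * ((φ v g)⁻¹ * φ v (g * (h * s)))
          = (φ v (g * h))⁻¹ * φ v ((g * h) * s) := by group
      rw [lhs, e1 (g * h), e2, map_mul, mul_inv_rev]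
      rfl
  exact congrFun main h

lemma symm_cocycle (ρ : ℕ)
    (hφ : ∀ v : Fin n, InSymRho r ρ (φ v) ∧ E r (φ v) = pull r σ x v)
    (v : Fin n) (a y : G r) :
    (φ ((σ a)⁻¹ v)).symm y = a⁻¹ * (φ v).symm (φ v a * y) := by
  rw [Equiv.symm_apply_eq]
  have := cocycle σ x φ ρ hφ v a (a⁻¹ * (φ v).symm (φ v a * y))
  rw [← this, mul_inv_cancel_left, Equiv.apply_symm_apply]
  group

theorem statement17' (ρ : ℕ)
    (hφ : ∀ v : Fin n, InSymRho r ρ (φ v) ∧ E r (φ v) = pull r σ x v) :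
    ∃ τ : G r →* Equiv.Perm (Fin n),
      (∀ (g : G r) (v : Fin n), τ g v = σ (((φ v).symm g⁻¹)⁻¹) v) ∧
      (∀ τ' : G r →* Equiv.Perm (Fin n),
        (∀ (g : G r) (v : Fin n), τ' g v = σ (((φ v).symm g⁻¹)⁻¹) v) → τ' = τ) ∧
      (∀ v : Fin n, F r (φ v) = pull r τ x v) := by
  set T : G r → Fin n → Fin n := fun g v => σ (((φ v).symm g⁻¹)⁻¹) v with hT
  have hsymm1 : ∀ v : Fin n, (φ v).symm 1 = 1 := by
    intro v
    rw [Equiv.symm_apply_eq]; exact ((hφ v).1.1).symm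
  have hT1 : ∀ v, T 1 v = v := by
    intro v; simp [hT, hsymm1]; rfl
  have hTmul : ∀ g₁ g₂ v, T (g₁ * g₂) v = T g₁ (T g₂ v) := by
    intro g₁ g₂ v
    set a := (φ v).symm g₂⁻¹ with ha
    have hw : T g₂ v = (σ a)⁻¹ v := by simp [hT, ha, map_inv]
    rw [hw]
    have hsc := symm_cocycle σ x φ ρ hφ v a g₁⁻¹
    have hφva : φ v a = g₂⁻¹ := by rw [ha, Equiv.apply_symm_apply]
    simp only [hT]
    have : g₂⁻¹ * g₁⁻¹ = (g₁ * g₂)⁻¹ := by group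
    rw [hsc, hφva, this]
    set b := (φ v).symm (g₁ * g₂)⁻¹ with hbdef
    rw [mul_inv_rev, inv_inv, map_mul]
    simp [Equiv.Perm.mul_apply]
  have hTinv : ∀ g : G r, Function.LeftInverse (T g⁻¹) (T g) ∧
      Function.RightInverse (T g⁻¹) (T g) := by
    intro g
    constructor
    · intro v; rw [← hTmul]; simp [hT1]
    · intro v; rw [← hTmul]; simp [hT1]
  set P : G r → Equiv.Perm (Fin n) := fun g =>
    ⟨T g, T g⁻¹, (hTinv g).1, (hTinv g).2⟩ with hP
  have hPapp : ∀ g v, P g v = T g v := fun _ _ => rfl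
  have hmul : ∀ g₁ g₂, P (g₁ * g₂) = P g₁ * P g₂ := by
    intro g₁ g₂
    apply Equiv.ext
    intro v
    simp [hPapp, Equiv.Perm.mul_apply, hTmul]
  refine ⟨MonoidHom.mk' P hmul, fun g v => rfl, ?_, ?_⟩
  · intro τ' hτ'
    apply MonoidHom.ext; intro g
    apply Equiv.ext; intro v
    rw [hτ' g v]; rfl
  · intro v
    funext h s
    have hinv : ((MonoidHom.mk' P hmul) h)⁻¹ v = T h⁻¹ v := by
      rw [← map_inv]; rfl
    show F r (φ v) h s = x (((MonoidHom.mk' P hmul) h)⁻¹ v) s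
    rw [hinv]
    set b := (φ v).symm h with hb
    have : T h⁻¹ v = (σ b)⁻¹ v := by simp [hT, hb, map_inv]
    rw [this]
    have hv := congrFun (congrFun (hφ v).2 b) s
    simp only [E, pull] at hv ⊢
    rw [← hv, F, hb, Equiv.apply_symm_apply]

end main

/-- Lemma `L:tau`. -/
theorem statement17 (r ρ n : ℕ) (hr : 1 ≤ r)
    (σ : G r →* Equiv.Perm (Fin n)) (x : Fin n → A r)
    (φ : Fin n → Equiv.Perm (G r))
    (hφ : ∀ v : Fin n, InSymRho r ρ (φ v) ∧ E r (φ v) = pull r σ x v) :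
    ∃ τ : G r →* Equiv.Perm (Fin n),
      (∀ (g : G r) (v : Fin n), τ g v = σ (((φ v).symm g⁻¹)⁻¹) v) ∧
      (∀ τ' : G r →* Equiv.Perm (Fin n),
        (∀ (g : G r) (v : Fin n), τ' g v = σ (((φ v).symm g⁻¹)⁻¹) v) → τ' = τ) ∧
      (∀ v : Fin n, F r (φ v) = pull r τ x v) :=
  statement17' σ x φ ρ hφ

end Stmt17
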